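/- Suppose R₂ᴳ : [0,T] → ℝ^{n×n} is C¹ with R₂ᴳ'(t) + (R₂ᴳ(t)ᵀ + R₂ᴳ(t))A + (1/2)(R₂ᴳ(t)ᵀ + R₂ᴳ(t))σσᵀ(R₂ᴳ(t)ᵀ + R₂ᴳ(t)) = 0 and R₂ᴳ(T) = Θ; R₁ᴳ : [0,T] → ℝ^{1×n} is C¹ with R₁ᴳ'(t) + R₁ᴳ(t)(A + σσᵀ(R₂ᴳ(t)ᵀ + R₂ᴳ(t))) + Bᵀ(R₂ᴳ(t)ᵀ + R₂ᴳ(t)) = 0 and R₁ᴳ(T) = θ; and R₀ᴳ(t) = γ + ∫_t^T (R₁ᴳ(s)B + (1/2)R₁ᴳ(s)σσᵀR₁ᴳ(s)ᵀ + tr(σᵀR₂ᴳ(s)σ)) ds. Then the function g(t,x) := exp(xᵀR₂ᴳ(t)x + R₁ᴳ(t)x + R₀ᴳ(t)) satisfies, for all (t,x) ∈ [0,T] × ℝⁿ, ∂g/∂t(t,x) + (Ax + B)·∇ₓg(t,x) + (1/2)Σ_{i,j=1}^n (σσᵀ)_{ij} ∂²g/∂xᵢ∂xⱼ(t,x) =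 0, together with the terminal condition g(T,x) = exp(xᵀΘx + θx + γ) for all x ∈ ℝⁿ. -/

import Mathlib

open Matrix Set

attribute [local instance] Matrix.normedAddCommGroup Matrix.normedSpace

/-- Partial derivative of `g : ℝⁿ → ℝ` in the `i`-th coordinate at `x`. -/
noncomputable def pd {n : ℕ} (i : Fin n) (g : (Fin n → ℝ) → ℝ) (x : Fin n → ℝ) : ℝ :=
  deriv (fun s => g (Function.update x i s)) (x i)

section Aux

lemma hasDerivAt_update' {n : ℕ} (x : Fin n → ℝ) (j i : Fin n) (s₀ : ℝ) :
    HasDerivAt (fun s => Function.update x j s i) (if i = j then 1 else 0) s₀ := by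
  rcases eq_or_ne i j with h | h
  · subst h; simpa [Function.update_self] using (hasDerivAt_id' s₀)
  · simpa [Function.update_of_ne h, h] using (hasDerivAt_const s₀ (x i))

lemma hasDerivAt_lin {n : ℕ} (w x : Fin n → ℝ) (j : Fin n) (s₀ : ℝ) :
    HasDerivAt (fun s => w ⬝ᵥ Function.update x j s) (w j) s₀ := by
  have h : HasDerivAt (fun s => w ⬝ᵥ Function.update x j s)
      (∑ i, w i * (if i = j then 1 else 0)) s₀ := by
    simp only [dotProduct]
    exact HasDerivAt.fun_sum (fun i _ => ((hasDerivAt_update' x j i s₀).const_mul (w i)))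
  simpa [mul_ite, Finset.sum_ite_eq'] using h

lemma hasDerivAt_quad {n : ℕ} (M : Matrix (Fin n) (Fin n) ℝ) (x : Fin n → ℝ) (j : Fin n) :
    HasDerivAt (fun s => (Function.update x j s) ⬝ᵥ M *ᵥ (Function.update x j s))
      (((Mᵀ + M) *ᵥ x) j) (x j) := by
  have key : ∀ i : Fin n, HasDerivAt
      (fun s => Function.update x j s i * ((fun k => M i k) ⬝ᵥ Function.update x j s))
      ((if i = j then 1 else 0) * ((fun k => M i k) ⬝ᵥ x) + x i * M i j) (x j) := by
    intro i
    have h1 := hasDerivAt_update' x j i (x j)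
    have h2 := hasDerivAt_lin (fun k => M i k) x j (x j)
    have := h1.fun_mul h2
    simpa [Function.update_eq_self] using this
  have h : HasDerivAt (fun s => (Function.update x j s) ⬝ᵥ M *ᵥ (Function.update x j s))
      (∑ i, ((if i = j then 1 else 0) * ((fun k => M i k) ⬝ᵥ x) + x i * M i j)) (x j) := by
    simp only [dotProduct, Matrix.mulVec]
    exact HasDerivAt.fun_sum (fun i _ => key i)
  have e : (∑ i, ((if i = j then 1 else 0) * ((fun k => M i k) ⬝ᵥ x) + x i * M i j))
      = ((Mᵀ + M) *ᵥ x) j := by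
    simp [Finset.sum_add_distrib, ite_mul, Finset.sum_ite_eq', Matrix.mulVec,
      dotProduct, Matrix.add_apply, Matrix.transpose_apply,
      mul_comm, add_comm]
    rw [← Finset.sum_add_distrib]
    exact Finset.sum_congr rfl (fun k _ => by ring)
  rw [← e]; exact h

lemma pd_exp {n : ℕ} (M : Matrix (Fin n) (Fin n) ℝ) (r x : Fin n → ℝ) (c : ℝ) (j : Fin n) :
    pd j (fun y => Real.exp (y ⬝ᵥ M *ᵥ y + r ⬝ᵥ y + c)) x
      = Real.exp (x ⬝ᵥ M *ᵥ x + r ⬝ᵥ x + c) * (((Mᵀ + M) *ᵥ x) j + r j) := by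
  have h : HasDerivAt (fun s => Real.exp ((Function.update x j s) ⬝ᵥ M *ᵥ (Function.update x j s)
        + r ⬝ᵥ Function.update x j s + c))
      (Real.exp (x ⬝ᵥ M *ᵥ x + r ⬝ᵥ x + c) * (((Mᵀ + M) *ᵥ x) j + r j)) (x j) := by
    have := (((hasDerivAt_quad M x j).add (hasDerivAt_lin r x j (x j))).add_const c).exp
    simpa [Function.update_eq_self] using this
  exact h.deriv

lemma pd_exp_mul {n : ℕ} (M : Matrix (Fin n) (Fin n) ℝ) (N : Matrix (Fin n) (Fin n) ℝ)
    (r x : Fin n → ℝ) (c a : ℝ) (i j : Fin n) :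
    pd i (fun y => Real.exp (y ⬝ᵥ M *ᵥ y + r ⬝ᵥ y + c) * ((N *ᵥ y) j + a)) x
      = Real.exp (x ⬝ᵥ M *ᵥ x + r ⬝ᵥ x + c)
        * (((((Mᵀ + M) *ᵥ x) i + r i) * ((N *ᵥ x) j + a)) + N j i) := by
  have hexp : HasDerivAt (fun s => Real.exp ((Function.update x i s) ⬝ᵥ M *ᵥ (Function.update x i s)
        + r ⬝ᵥ Function.update x i s + c))
      (Real.exp (x ⬝ᵥ M *ᵥ x + r ⬝ᵥ x + c) * (((Mᵀ + M) *ᵥ x) i + r i)) (x i) := by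
    have := (((hasDerivAt_quad M x i).add (hasDerivAt_lin r x i (x i))).add_const c).exp
    simpa [Function.update_eq_self] using this
  have hlin : HasDerivAt (fun s => (N *ᵥ Function.update x i s) j + a) (N j i) (x i) := by
    have : HasDerivAt (fun s => (fun k => N j k) ⬝ᵥ Function.update x i s) (N j i) (x i) :=
      hasDerivAt_lin (fun k => N j k) x i (x i)
    exact this.add_const a
  have h := hexp.mul hlin
  have h2 : deriv (fun s => Real.exp ((Function.update x i s) ⬝ᵥ M *ᵥ (Function.update x i s)
        + r ⬝ᵥ Function.update x i s + c) * ((N *ᵥ Function.update x i s) j + a)) (x i)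
      = _ := h.deriv
  rw [pd, h2]
  simp [Function.update_eq_self]
  ring

lemma dot2 {n : ℕ} (u v : Fin n → ℝ) (P : Matrix (Fin n) (Fin n) ℝ) :
    u ⬝ᵥ (P *ᵥ v) = ∑ i, ∑ j, P i j * (u i * v j) := by
  simp only [dotProduct, Matrix.mulVec, Finset.mul_sum]
  exact Finset.sum_congr rfl fun i _ => Finset.sum_congr rfl fun j _ => by ring

/-- The continuous linear map `M ↦ x ⬝ᵥ M *ᵥ x`. -/
noncomputable def quadCLM {n : ℕ} (x : Fin n → ℝ) : Matrix (Fin n) (Fin n) ℝ →L[ℝ] ℝ :=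
  LinearMap.toContinuousLinearMap
    { toFun := fun M => x ⬝ᵥ M *ᵥ x
      map_add' := fun M N => by simp [Matrix.add_mulVec, dotProduct_add]
      map_smul' := fun c M => by
        simp [Matrix.smul_mulVec, dotProduct_smul, smul_eq_mul] }

/-- The continuous linear map `M ↦ (M *ᵥ x) 0` for `1 × n` matrices. -/
noncomputable def linCLM {n : ℕ} (x : Fin n → ℝ) : Matrix (Fin 1) (Fin n) ℝ →L[ℝ] ℝ :=
  LinearMap.toContinuousLinearMap
    { toFun := fun M => (M *ᵥ x) 0
      map_add' := fun M N => by simp [Matrix.add_mulVec]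
      map_smul' := fun c M => by simp [Matrix.smul_mulVec, smul_eq_mul] }

/-- The continuous linear map extracting a matrix entry. -/
noncomputable def entryCLM {m k : ℕ} (i : Fin m) (j : Fin k) : Matrix (Fin m) (Fin k) ℝ →L[ℝ] ℝ :=
  LinearMap.toContinuousLinearMap
    { toFun := fun M => M i j
      map_add' := fun M N => rfl
      map_smul' := fun c M => rfl }

/-- The continuous linear map `M ↦ trace (σᵀ * M * σ)`. -/
noncomputable def trCLM {n : ℕ} (σ : Matrix (Fin n) (Fin n) ℝ) :
    Matrix (Fin n) (Fin n) ℝ →L[ℝ] ℝ :=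
  LinearMap.toContinuousLinearMap
    { toFun := fun M => Matrix.trace (σᵀ * M * σ)
      map_add' := fun M N => by simp [Matrix.mul_add, Matrix.add_mul]
      map_smul' := fun c M => by simp [Matrix.mul_smul, Matrix.smul_mul] }

end Aux

/-- With `R₂ᴳ`, `R₁ᴳ` solving the futures Riccati equations and `R₀ᴳ` its
integral, `g(t,x) = exp(xᵀR₂ᴳ(t)x + R₁ᴳ(t)x + R₀ᴳ(t))` solves the backward Kolmogorov PDE
`∂g/∂t + (Ax+B)·∇ₓg + (1/2)Σ (σσᵀ)ᵢⱼ ∂²g/∂xᵢ∂xⱼ = 0` with terminal value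
`g(T,x) = exp(xᵀΘx + θx + γ)`. -/
theorem statement12 (n : ℕ) (hn : 1 ≤ n) (T : ℝ) (hT : 0 < T)
    (A σ : Matrix (Fin n) (Fin n) ℝ) (B : Matrix (Fin n) (Fin 1) ℝ)
    (Θ : Matrix (Fin n) (Fin n) ℝ) (θ : Matrix (Fin 1) (Fin n) ℝ) (γ : ℝ)
    (R₂ : ℝ → Matrix (Fin n) (Fin n) ℝ)
    (hR₂smooth : ContDiffOn ℝ 1 R₂ (Icc 0 T))
    (hR₂ode : ∀ t ∈ Icc 0 T,
      derivWithin R₂ (Icc 0 T) t + ((R₂ t)ᵀ + R₂ t) * A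
        + (1 / 2 : ℝ) • (((R₂ t)ᵀ + R₂ t) * (σ * σᵀ) * ((R₂ t)ᵀ + R₂ t)) = 0)
    (hR₂T : R₂ T = Θ)
    (R₁ : ℝ → Matrix (Fin 1) (Fin n) ℝ)
    (hR₁smooth : ContDiffOn ℝ 1 R₁ (Icc 0 T))
    (hR₁ode : ∀ t ∈ Icc 0 T,
      derivWithin R₁ (Icc 0 T) t
        + R₁ t * (A + (σ * σᵀ) * ((R₂ t)ᵀ + R₂ t))
        + Bᵀ * ((R₂ t)ᵀ + R₂ t) = 0)
    (hR₁T : R₁ T = θ)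
    (R₀ : ℝ → ℝ)
    (hR₀ : ∀ t, R₀ t = γ + ∫ s in t..T,
      ((R₁ s * B) 0 0 + (1 / 2) * (R₁ s * (σ * σᵀ) * (R₁ s)ᵀ) 0 0
        + Matrix.trace (σᵀ * R₂ s * σ)))
    (g : ℝ → (Fin n → ℝ) → ℝ)
    (hg : ∀ t x, g t x =
      Real.exp (x ⬝ᵥ (R₂ t).mulVec x + (R₁ t).mulVec x 0 + R₀ t)) :
    (∀ t ∈ Icc 0 T, ∀ x : Fin n → ℝ,
      derivWithin (fun τ => g τ x) (Icc 0 T) t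
        + (∑ i, (A.mulVec x i + B i 0) * pd i (g t) x)
        + (1 / 2) * ∑ i, ∑ j, (σ * σᵀ) i j * pd i (pd j (g t)) x = 0) ∧
    (∀ x : Fin n → ℝ, g T x =
      Real.exp (x ⬝ᵥ Θ.mulVec x + θ.mulVec x 0 + γ)) := by
  have hR₀T : R₀ T = γ := by simp [hR₀ T]
  constructor
  · -- main PDE
    intro t ht x
    set P : Matrix (Fin n) (Fin n) ℝ := σ * σᵀ with hP
    have hPsymm : ∀ i j, P i j = P j i := by
      intro i j
      simp [hP, Matrix.mul_apply, Matrix.transpose_apply, mul_comm]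
    set M : Matrix (Fin n) (Fin n) ℝ := R₂ t with hM
    set S : Matrix (Fin n) (Fin n) ℝ := Mᵀ + M with hS
    have hSsymm : Sᵀ = S := by simp [hS, Matrix.transpose_add, add_comm]
    set r : Fin n → ℝ := R₁ t 0 with hr
    -- the integrand of R₀
    set φ : ℝ → ℝ := fun s => (R₁ s * B) 0 0 + (1 / 2) * (R₁ s * P * (R₁ s)ᵀ) 0 0
        + Matrix.trace (σᵀ * R₂ s * σ) with hφ
    -- function-level rewrite of g t
    have hgt : g t = fun y => Real.exp (y ⬝ᵥ M *ᵥ y + r ⬝ᵥ y + R₀ t) := by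
      funext y; rw [hg]; rfl
    set E : ℝ := Real.exp (x ⬝ᵥ M *ᵥ x + r ⬝ᵥ x + R₀ t) with hE
    -- first spatial derivatives
    have hpd1 : ∀ j, pd j (g t) x = E * ((S *ᵥ x) j + r j) := by
      intro j; rw [hgt]; exact pd_exp M r x (R₀ t) j
    -- second spatial derivatives
    have hpd2 : ∀ i j, pd i (pd j (g t)) x
        = E * ((((S *ᵥ x) i + r i) * ((S *ᵥ x) j + r j)) + S j i) := by
      intro i j
      have h1 : pd j (g t) = fun y => Real.exp (y ⬝ᵥ M *ᵥ y + r ⬝ᵥ y + R₀ t)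
          * ((S *ᵥ y) j + r j) := by
        funext y; rw [hgt]; exact pd_exp M r y (R₀ t) j
      rw [h1]
      exact pd_exp_mul M S r x (R₀ t) (r j) i j
    -- time derivative
    have hUD : UniqueDiffWithinAt ℝ (Icc (0:ℝ) T) t := (uniqueDiffOn_Icc hT) t ht
    have hR₂d : HasDerivWithinAt R₂ (derivWithin R₂ (Icc 0 T) t) (Icc 0 T) t :=
      ((hR₂smooth.differentiableOn one_ne_zero) t ht).hasDerivWithinAt
    have hR₁d : HasDerivWithinAt R₁ (derivWithin R₁ (Icc 0 T) t) (Icc 0 T) t :=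
      ((hR₁smooth.differentiableOn one_ne_zero) t ht).hasDerivWithinAt
    set M₂' := derivWithin R₂ (Icc 0 T) t with hM₂'
    set M₁' := derivWithin R₁ (Icc 0 T) t with hM₁'
    have hq : HasDerivWithinAt (fun τ => x ⬝ᵥ (R₂ τ) *ᵥ x) (x ⬝ᵥ M₂' *ᵥ x) (Icc 0 T) t := by
      have := ((quadCLM x).hasFDerivAt (x := M)).comp_hasDerivWithinAt t hR₂d
      exact this
    have hl : HasDerivWithinAt (fun τ => ((R₁ τ) *ᵥ x) 0) ((M₁' *ᵥ x) 0) (Icc 0 T) t := by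
      have := ((linCLM x).hasFDerivAt (x := R₁ t)).comp_hasDerivWithinAt t hR₁d
      exact this
    -- continuity of the integrand on Icc 0 T
    have hR₁c : ContinuousOn R₁ (Icc 0 T) := hR₁smooth.continuousOn
    have hR₂c : ContinuousOn R₂ (Icc 0 T) := hR₂smooth.continuousOn
    have hent : ∀ i : Fin n, ContinuousOn (fun s => R₁ s 0 i) (Icc 0 T) := by
      intro i
      have := (entryCLM (0 : Fin 1) i).continuous.comp_continuousOn hR₁c
      exact this
    have hφcont : ContinuousOn φ (Icc 0 T) := by
      have he1 : ContinuousOn (fun s => (R₁ s * B) 0 0) (Icc 0 T) := by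
        have heq : ∀ s, (R₁ s * B) 0 0 = ∑ i, R₁ s 0 i * B i 0 := by
          intro s; rw [Matrix.mul_apply]
        simp only [heq]
        exact continuousOn_finset_sum _ (fun i _ => (hent i).mul continuousOn_const)
      have he2 : ContinuousOn (fun s => (R₁ s * P * (R₁ s)ᵀ) 0 0) (Icc 0 T) := by
        have heq : ∀ s, (R₁ s * P * (R₁ s)ᵀ) 0 0
            = ∑ j, (∑ i, R₁ s 0 i * P i j) * R₁ s 0 j := by
          intro s
          rw [Matrix.mul_apply]
          exact Finset.sum_congr rfl (fun j _ => by rw [Matrix.mul_apply]; rfl)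
        simp only [heq]
        exact continuousOn_finset_sum _ (fun j _ =>
          (continuousOn_finset_sum _ (fun i _ => (hent i).mul continuousOn_const)).mul (hent j))
      have he3 : ContinuousOn (fun s => Matrix.trace (σᵀ * R₂ s * σ)) (Icc 0 T) := by
        have := (trCLM σ).continuous.comp_continuousOn hR₂c
        exact this
      exact (he1.add (continuousOn_const.mul he2)).add he3
    -- continuous extension of φ and the FTC
    set φext : ℝ → ℝ := IccExtend hT.le ((Icc (0:ℝ) T).restrict φ) with hφext
    have hφextc : Continuous φext := hφcont.restrict.Icc_extend'
    have hagree : ∀ u ∈ Icc (0:ℝ) T, φext u = φ u := by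
      intro u hu; rw [hφext, IccExtend_of_mem _ _ hu]; rfl
    have hR₀eq : ∀ u ∈ Icc (0:ℝ) T, R₀ u = γ + ∫ s in u..T, φext s := by
      intro u hu
      rw [hR₀ u]
      congr 1
      apply intervalIntegral.integral_congr
      intro s hs
      have hsT : s ∈ Icc (0:ℝ) T :=
        Set.uIcc_subset_Icc hu (Set.right_mem_Icc.2 hT.le) hs
      exact (hagree s hsT).symm
    have hInt : HasDerivWithinAt (fun u => γ + ∫ s in u..T, φext s) (-(φ t)) (Icc 0 T) t := by
      have h := intervalIntegral.integral_hasDerivAt_left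
        (hφextc.intervalIntegrable t T)
        (hφextc.stronglyMeasurableAtFilter _ _)
        hφextc.continuousAt
      have h2 := (h.hasDerivWithinAt (s := Icc (0:ℝ) T)).const_add γ
      rwa [hagree t ht] at h2
    have hR₀d : HasDerivWithinAt R₀ (-(φ t)) (Icc 0 T) t :=
      hInt.congr (fun u hu => hR₀eq u hu) (hR₀eq t ht)
    -- time derivative of g · x
    have htd : derivWithin (fun τ => g τ x) (Icc 0 T) t
        = E * (x ⬝ᵥ M₂' *ᵥ x + (M₁' *ᵥ x) 0 + -(φ t)) := by
      have hgfun : (fun τ => g τ x)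
          = fun τ => Real.exp (x ⬝ᵥ (R₂ τ) *ᵥ x + ((R₁ τ) *ᵥ x) 0 + R₀ τ) := by
        funext τ; rw [hg]
      have hF := ((hq.add hl).add hR₀d).exp
      rw [hgfun]
      have := hF.derivWithin hUD
      exact this
    -- pull E out of the sums
    have hsum1 : ∑ i, (A.mulVec x i + B i 0) * pd i (g t) x
        = E * ∑ i, (A.mulVec x i + B i 0) * ((S *ᵥ x) i + r i) := by
      rw [Finset.mul_sum]
      exact Finset.sum_congr rfl (fun i _ => by rw [hpd1 i]; ring)
    have hsum2 : ∑ i, ∑ j, P i j * pd i (pd j (g t)) x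
        = E * ∑ i, ∑ j, P i j * (((S *ᵥ x) i + r i) * ((S *ᵥ x) j + r j) + S j i) := by
      rw [Finset.mul_sum]
      refine Finset.sum_congr rfl (fun i _ => ?_)
      rw [Finset.mul_sum]
      exact Finset.sum_congr rfl (fun j _ => by rw [hpd2 i j]; ring)
    -- notation for the algebra
    set a : Fin n → ℝ := fun i => (A *ᵥ x) i with ha
    set b : Fin n → ℝ := fun i => B i 0 with hb
    set s' : Fin n → ℝ := fun i => (S *ᵥ x) i with hs'
    -- scalar identities
    have u2a : x ⬝ᵥ (S * A) *ᵥ x = ∑ i, a i * s' i := by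
      rw [← Matrix.mulVec_mulVec, Matrix.dotProduct_mulVec, ← hSsymm,
        Matrix.vecMul_transpose]
      exact Finset.sum_congr rfl (fun i _ => mul_comm _ _)
    have u2b : x ⬝ᵥ (S * P * S) *ᵥ x = ∑ i, ∑ j, P i j * (s' i * s' j) := by
      rw [← Matrix.mulVec_mulVec, ← Matrix.mulVec_mulVec, Matrix.dotProduct_mulVec, ← hSsymm,
        Matrix.vecMul_transpose, hSsymm, dot2]
    have u1a : ((R₁ t * A) *ᵥ x) 0 = ∑ i, a i * r i := by
      rw [← Matrix.mulVec_mulVec]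
      show R₁ t 0 ⬝ᵥ (A *ᵥ x) = _
      simp only [dotProduct]
      exact Finset.sum_congr rfl (fun i _ => mul_comm _ _)
    have u1b : ((R₁ t * (P * S)) *ᵥ x) 0 = ∑ i, ∑ j, P i j * (r i * s' j) := by
      rw [← Matrix.mulVec_mulVec, ← Matrix.mulVec_mulVec]
      show R₁ t 0 ⬝ᵥ (P *ᵥ (S *ᵥ x)) = _
      rw [dot2]
    have u1c : ((Bᵀ * S) *ᵥ x) 0 = ∑ i, b i * s' i := by
      rw [← Matrix.mulVec_mulVec]
      show Bᵀ 0 ⬝ᵥ (S *ᵥ x) = _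
      simp only [dotProduct]
      rfl
    have u0a : (R₁ t * B) 0 0 = ∑ i, b i * r i := by
      rw [Matrix.mul_apply]
      exact Finset.sum_congr rfl (fun i _ => mul_comm _ _)
    have u0b : (R₁ t * P * (R₁ t)ᵀ) 0 0 = ∑ i, ∑ j, P i j * (r i * r j) := by
      rw [Matrix.mul_apply]
      have hin : ∀ j, (R₁ t * P) 0 j * (R₁ t)ᵀ j 0 = ∑ i, P i j * (r i * r j) := by
        intro j
        rw [Matrix.mul_apply, Finset.sum_mul]
        exact Finset.sum_congr rfl (fun i _ => by
          simp only [Matrix.transpose_apply, hr]; try ring)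
      rw [Finset.sum_congr rfl (fun j _ => hin j)]
      rw [Finset.sum_comm]
    have u0c : Matrix.trace (σᵀ * R₂ t * σ) = (1/2) * ∑ i, ∑ j, P i j * S j i := by
      have h1 : ∑ i, ∑ j, P i j * S j i = Matrix.trace (P * S) := by
        simp only [Matrix.trace, Matrix.diag_apply, Matrix.mul_apply]
      have hMP : Matrix.trace (M * P) = Matrix.trace (σᵀ * R₂ t * σ) := by
        rw [hP, ← Matrix.mul_assoc, Matrix.trace_mul_comm, ← Matrix.mul_assoc, hM]
      have hPsym : Pᵀ = P := by rw [hP, Matrix.transpose_mul, Matrix.transpose_transpose]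
      have hMtP : Matrix.trace (Mᵀ * P) = Matrix.trace (M * P) := by
        calc Matrix.trace (Mᵀ * P) = Matrix.trace ((Mᵀ * P)ᵀ) := (Matrix.trace_transpose _).symm
        _ = Matrix.trace (Pᵀ * M) := by rw [Matrix.transpose_mul, Matrix.transpose_transpose]
        _ = Matrix.trace (P * M) := by rw [hPsym]
        _ = Matrix.trace (M * P) := Matrix.trace_mul_comm _ _
      have h2 : Matrix.trace (P * S) = 2 * Matrix.trace (σᵀ * R₂ t * σ) := by
        rw [Matrix.trace_mul_comm, hS, Matrix.add_mul, Matrix.trace_add, hMtP, hMP]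
        ring
      rw [h1, h2]
      ring
    -- ODE consequences
    have hode2 : x ⬝ᵥ M₂' *ᵥ x
        = -(∑ i, a i * s' i) - (1/2) * ∑ i, ∑ j, P i j * (s' i * s' j) := by
      have h := hR₂ode t ht
      rw [← hM, ← hS, ← hM₂'] at h
      rw [add_assoc] at h
      have h2 := eq_neg_of_add_eq_zero_left h
      rw [h2]
      simp only [Matrix.neg_mulVec, Matrix.add_mulVec, dotProduct_neg,
        dotProduct_add, Matrix.smul_mulVec, dotProduct_smul,
        smul_eq_mul]
      rw [u2a, u2b]
      ring
    have hode1 : (M₁' *ᵥ x) 0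
        = -(∑ i, a i * r i) - (∑ i, ∑ j, P i j * (r i * s' j)) - ∑ i, b i * s' i := by
      have h := hR₁ode t ht
      rw [← hM, ← hS, ← hM₁'] at h
      rw [add_assoc] at h
      have h2 := eq_neg_of_add_eq_zero_left h
      rw [Matrix.mul_add] at h2
      rw [h2]
      simp only [Matrix.neg_mulVec, Matrix.add_mulVec, dotProduct_neg,
        dotProduct_add, Pi.neg_apply, Pi.add_apply]
      rw [u1a, u1b, u1c]
      ring
    have hφt : φ t = ∑ i, b i * r i + (1/2) * (∑ i, ∑ j, P i j * (r i * r j))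
        + (1/2) * ∑ i, ∑ j, P i j * S j i := by
      simp only [hφ]
      rw [u0a, u0b, u0c]
    -- cross-term symmetry
    have hcross : ∑ i, ∑ j, P i j * (s' i * r j) = ∑ i, ∑ j, P i j * (r i * s' j) := by
      rw [Finset.sum_comm]
      exact Finset.sum_congr rfl (fun i _ => Finset.sum_congr rfl (fun j _ => by
        rw [hPsymm j i]; ring))
    -- put everything together
    rw [htd, hsum1, hsum2, hode2, hode1, hφt]
    have expand : ∑ i, (a i + b i) * (s' i + r i)
        = ∑ i, a i * s' i + ∑ i, a i * r i + ∑ i, b i * s' i + ∑ i, b i * r i := by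
      simp only [← Finset.sum_add_distrib]
      exact Finset.sum_congr rfl (fun i _ => by ring)
    have expand2 : ∑ i, ∑ j, P i j * ((s' i + r i) * (s' j + r j) + S j i)
        = ∑ i, ∑ j, P i j * (s' i * s' j) + ∑ i, ∑ j, P i j * (s' i * r j)
          + ∑ i, ∑ j, P i j * (r i * s' j) + ∑ i, ∑ j, P i j * (r i * r j)
          + ∑ i, ∑ j, P i j * S j i := by
      simp only [← Finset.sum_add_distrib]
      exact Finset.sum_congr rfl (fun i _ =>
        Finset.sum_congr rfl (fun j _ => by ring))
    have hgoal1 : ∑ i, (A.mulVec x i + B i 0) * ((S *ᵥ x) i + r i)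
        = ∑ i, (a i + b i) * (s' i + r i) := rfl
    rw [hgoal1, expand, expand2, hcross]
    ring
  · -- terminal condition
    intro x
    rw [hg, hR₂T, hR₁T, hR₀T]
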